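/- Let h be a finite dimensional Leibniz algebra, g a Leibniz algebra, and A a commutative algebra. Then the map γ : Hom_Alg(A(h,g), A) → Hom_Lbz(g, h ⊗ A) given by γ(θ) = (Id_h ⊗ θ) ∘ η_g is a bijection. -/

import Mathlib

open TensorProduct MvPolynomial

/-- The universal polynomial `P_{(a,i,j)} = Σ_u β^u_{ij} X_{au} - Σ_{s,t} τ^a_{st} X_{si} X_{tj}`. -/
noncomputable def univPoly {k : Type*} [Field k] {n : ℕ} {I : Type*}
    (τ : Fin n → Fin n → Fin n → k) (β : I → I → I →₀ k)
    (a : Fin n) (i j : I) : MvPolynomial (Fin n × I) k :=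
  (β i j).sum (fun u c => C c * X (a, u)) -
    ∑ s : Fin n, ∑ t : Fin n, C (τ s t a) * X (s, i) * X (t, j)

/-- The ideal generated by the universal polynomials. -/
noncomputable def univIdeal {k : Type*} [Field k] {n : ℕ} {I : Type*}
    (τ : Fin n → Fin n → Fin n → k) (β : I → I → I →₀ k) :
    Ideal (MvPolynomial (Fin n × I) k) :=
  Ideal.span (Set.range fun p : Fin n × I × I => univPoly τ β p.1 p.2.1 p.2.2)

/-- The universal algebra `A(h,g)`. -/
noncomputable abbrev univAlg {k : Type*} [Field k] {n : ℕ} {I : Type*}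
    (τ : Fin n → Fin n → Fin n → k) (β : I → I → I →₀ k) :=
  MvPolynomial (Fin n × I) k ⧸ univIdeal τ β

/-- The generator `x_{si}` of `A(h,g)`. -/
noncomputable def univGen {k : Type*} [Field k] {n : ℕ} {I : Type*}
    (τ : Fin n → Fin n → Fin n → k) (β : I → I → I →₀ k)
    (s : Fin n) (i : I) : univAlg τ β :=
  Ideal.Quotient.mk (univIdeal τ β) (X (s, i))


section auxHelpers

variable {k : Type*} [Field k] {n : ℕ} {I : Type*} (A : Type*) [CommRing A] [Algebra k A]

noncomputable def coordMap (k : Type*) [Field k] {n : ℕ} (A : Type*) [CommRing A] [Algebra k A]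
    (s : Fin n) : (Fin n → k) ⊗[k] A →ₗ[k] A :=
  (TensorProduct.lid k A).toLinearMap ∘ₗ TensorProduct.map (LinearMap.proj s) LinearMap.id

lemma coordMap_tmul (s : Fin n) (x : Fin n → k) (a : A) :
    coordMap k A s (x ⊗ₜ a) = x s • a := by
  simp [coordMap]

lemma coordMap_sum_single (a : Fin n) (t : Fin n → A) :
    coordMap k A a (∑ s, Pi.single s (1:k) ⊗ₜ[k] t s) = t a := by
  rw [map_sum]
  simp [coordMap_tmul, Pi.single_apply, Finset.sum_ite_eq']

lemma coord_repr (v : (Fin n → k) ⊗[k] A) :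
    ∑ s, Pi.single s (1:k) ⊗ₜ[k] coordMap k A s v = v := by
  induction v with
  | zero => simp
  | tmul x a =>
      simp only [coordMap_tmul]
      have : ∀ s : Fin n, Pi.single s (1:k) ⊗ₜ[k] (x s • a)
          = (Pi.single s (x s) : Fin n → k) ⊗ₜ[k] a := by
        intro s
        rw [← TensorProduct.smul_tmul]
        congr 1
        rw [← Pi.single_smul, smul_eq_mul, mul_one]
      rw [Finset.sum_congr rfl fun s _ => this s, ← TensorProduct.sum_tmul,
        Finset.univ_sum_single]
  | add x y hx hy => simp only [map_add, tmul_add, Finset.sum_add_distrib, hx, hy]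

lemma tensor_ext_coord {v w : (Fin n → k) ⊗[k] A}
    (h : ∀ s, coordMap k A s v = coordMap k A s w) : v = w := by
  rw [← coord_repr A v, ← coord_repr A w]
  simp [h]

lemma linmap_finsupp {M : Type*} [AddCommGroup M] [Module k M]
    (G : (I →₀ k) →ₗ[k] M) (l : I →₀ k) :
    G l = l.sum fun u c => c • G (Finsupp.single u 1) := by
  conv_lhs => rw [← l.sum_single]
  rw [map_finsuppSum]
  exact Finsupp.sum_congr fun u _ => by rw [← Finsupp.smul_single_one, map_smul]

variable (τ : Fin n → Fin n → Fin n → k) (β : I → I → I →₀ k)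

lemma univGen_eq_mka (s : Fin n) (i : I) :
    univGen τ β s i = Ideal.Quotient.mkₐ k (univIdeal τ β) (X (s, i)) := rfl

lemma univRel (a : Fin n) (i j : I) :
    ((β i j).sum fun u c => c • univGen τ β a u) =
      ∑ s, ∑ t, τ s t a • (univGen τ β s i * univGen τ β t j) := by
  have hmem : univPoly τ β a i j ∈ univIdeal τ β :=
    Ideal.subset_span ⟨(a, i, j), rfl⟩
  have h0 : Ideal.Quotient.mkₐ k (univIdeal τ β) (univPoly τ β a i j) = 0 := by
    rw [Ideal.Quotient.mkₐ_eq_mk]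
    exact Ideal.Quotient.eq_zero_iff_mem.mpr hmem
  rw [univPoly, map_sub, sub_eq_zero] at h0
  simp only [← MvPolynomial.smul_eq_C_mul, smul_mul_assoc, map_finsuppSum, map_sum,
    map_smul, map_mul, ← univGen_eq_mka] at h0
  exact h0

lemma coord_B_sum (bH : (Fin n → k) →ₗ[k] (Fin n → k) →ₗ[k] (Fin n → k))
    (hbH : ∀ i j : Fin n, bH (Pi.single i 1) (Pi.single j 1) = fun s => τ i j s)
    (B : (Fin n → k) ⊗[k] A →ₗ[k] (Fin n → k) ⊗[k] A →ₗ[k] (Fin n → k) ⊗[k] A)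
    (hB : ∀ (x y : Fin n → k) (a c : A), B (x ⊗ₜ[k] a) (y ⊗ₜ[k] c) = bH x y ⊗ₜ[k] (a * c))
    (a : Fin n) (x y : Fin n → A) :
    coordMap k A a (B (∑ s, Pi.single s (1:k) ⊗ₜ[k] x s) (∑ t, Pi.single t (1:k) ⊗ₜ[k] y t))
      = ∑ s, ∑ t, τ s t a • (x s * y t) := by
  simp only [map_sum, LinearMap.sum_apply, hB, hbH, coordMap_tmul]
  rw [Finset.sum_comm]

end auxHelpers

/-- the map `γ : Hom_Alg(A(h,g), A) → Hom_Lbz(g, h ⊗ A)`,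
`γ(θ) = (Id_h ⊗ θ) ∘ η_g`, is a bijection: it is well defined (lands in Leibniz
algebra homomorphisms) and every Leibniz algebra homomorphism `g → h ⊗ A` comes
from a unique algebra homomorphism `θ`. -/
theorem stmt_3 (k : Type*) [Field k] (n : ℕ) (I : Type*)
    (τ : Fin n → Fin n → Fin n → k) (β : I → I → I →₀ k)
    (bH : (Fin n → k) →ₗ[k] (Fin n → k) →ₗ[k] (Fin n → k))
    (hbH : ∀ i j : Fin n, bH (Pi.single i 1) (Pi.single j 1) = fun s => τ i j s)
    (hLH : ∀ x y z, bH x (bH y z) = bH (bH x y) z - bH (bH x z) y)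
    (bG : (I →₀ k) →ₗ[k] (I →₀ k) →ₗ[k] (I →₀ k))
    (hbG : ∀ i j : I, bG (Finsupp.single i 1) (Finsupp.single j 1) = β i j)
    (hLG : ∀ x y z, bG x (bG y z) = bG (bG x y) z - bG (bG x z) y)
    (A : Type*) [CommRing A] [Algebra k A]
    (B : (Fin n → k) ⊗[k] A →ₗ[k] (Fin n → k) ⊗[k] A →ₗ[k] (Fin n → k) ⊗[k] A)
    (hB : ∀ (x y : Fin n → k) (a c : A), B (x ⊗ₜ[k] a) (y ⊗ₜ[k] c) = bH x y ⊗ₜ[k] (a * c))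
    (η : (I →₀ k) →ₗ[k] (Fin n → k) ⊗[k] univAlg τ β)
    (hη : ∀ i : I, η (Finsupp.single i 1) =
      ∑ s : Fin n, Pi.single s 1 ⊗ₜ[k] univGen τ β s i) :
    (∀ θ : univAlg τ β →ₐ[k] A, ∀ u v : I →₀ k,
      (TensorProduct.map LinearMap.id θ.toLinearMap ∘ₗ η) (bG u v) =
        B ((TensorProduct.map LinearMap.id θ.toLinearMap ∘ₗ η) u)
          ((TensorProduct.map LinearMap.id θ.toLinearMap ∘ₗ η) v)) ∧
    (∀ f : (I →₀ k) →ₗ[k] (Fin n → k) ⊗[k] A,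
      (∀ u v : I →₀ k, f (bG u v) = B (f u) (f v)) →
        ∃! θ : univAlg τ β →ₐ[k] A,
          TensorProduct.map LinearMap.id θ.toLinearMap ∘ₗ η = f) := by
  classical
  constructor
  · -- Part 1: γ(θ) is a Leibniz algebra homomorphism
    intro θ u v
    set F : (I →₀ k) →ₗ[k] (Fin n → k) ⊗[k] A :=
      TensorProduct.map LinearMap.id θ.toLinearMap ∘ₗ η with hF
    have hFsingle : ∀ i : I, F (Finsupp.single i 1)
        = ∑ s, Pi.single s (1:k) ⊗ₜ[k] θ (univGen τ β s i) := by
      intro i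
      rw [hF, LinearMap.comp_apply, hη, map_sum]
      simp [TensorProduct.map_tmul]
    have key : ∀ i j : I, F (bG (Finsupp.single i 1) (Finsupp.single j 1))
        = B (F (Finsupp.single i 1)) (F (Finsupp.single j 1)) := by
      intro i j
      rw [hbG]
      apply tensor_ext_coord
      intro a
      have hL : coordMap k A a (F (β i j)) = (β i j).sum fun u c => c • θ (univGen τ β a u) := by
        rw [show coordMap k A a (F (β i j)) = ((coordMap k A a) ∘ₗ F) (β i j) from rfl,
          linmap_finsupp]
        refine Finsupp.sum_congr fun u _ => ?_
        rw [LinearMap.comp_apply, hFsingle u, coordMap_sum_single]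
      have hR : coordMap k A a (B (F (Finsupp.single i 1)) (F (Finsupp.single j 1)))
          = ∑ s, ∑ t, τ s t a • (θ (univGen τ β s i) * θ (univGen τ β t j)) := by
        rw [hFsingle i, hFsingle j, coord_B_sum A τ bH hbH B hB]
      rw [hL, hR]
      have := congrArg θ (univRel τ β a i j)
      simpa only [map_finsuppSum, map_sum, map_smul, map_mul] using this
    have hbil : bG.compr₂ F = B.compl₁₂ F F := by
      ext i j
      simpa using key i j
    have := LinearMap.congr_fun (LinearMap.congr_fun hbil u) v
    simpa using this
  · -- Part 2: bijectivity
    intro f hf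
    set c : Fin n → I → A := fun s i => coordMap k A s (f (Finsupp.single i 1)) with hc
    have hfrep : ∀ i : I, f (Finsupp.single i 1) = ∑ s, Pi.single s (1:k) ⊗ₜ[k] c s i :=
      fun i => (coord_repr A _).symm
    set θ₀ : MvPolynomial (Fin n × I) k →ₐ[k] A := aeval (fun p : Fin n × I => c p.1 p.2)
      with hθ₀
    have hgen : ∀ (a : Fin n) (i j : I), θ₀ (univPoly τ β a i j) = 0 := by
      intro a i j
      have hkey := hf (Finsupp.single i 1) (Finsupp.single j 1)
      rw [hbG] at hkey
      have hcoord := congrArg (coordMap k A a) hkey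
      have hL : coordMap k A a (f (β i j)) = (β i j).sum fun u cc => cc • c a u := by
        rw [show coordMap k A a (f (β i j)) = ((coordMap k A a) ∘ₗ f) (β i j) from rfl,
          linmap_finsupp]
        rfl
      have hR : coordMap k A a (B (f (Finsupp.single i 1)) (f (Finsupp.single j 1)))
          = ∑ s, ∑ t, τ s t a • (c s i * c t j) := by
        rw [hfrep i, hfrep j, coord_B_sum A τ bH hbH B hB]
      rw [hL, hR] at hcoord
      rw [univPoly, map_sub, sub_eq_zero, hθ₀]
      simp only [map_finsuppSum, map_sum, map_mul, aeval_C, aeval_X]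
      simpa only [Algebra.smul_def, mul_assoc] using hcoord
    have hker : univIdeal τ β ≤ RingHom.ker θ₀.toRingHom := by
      rw [univIdeal, Ideal.span_le]
      rintro _ ⟨⟨a, i, j⟩, rfl⟩
      exact hgen a i j
    set θ : univAlg τ β →ₐ[k] A :=
      Ideal.Quotient.liftₐ (univIdeal τ β) θ₀ (fun p hp => show θ₀ p = 0 by simpa only [AlgHom.toRingHom_eq_coe, RingHom.coe_coe] using RingHom.mem_ker.mp (hker hp)) with hθ
    have hθgen : ∀ (s : Fin n) (i : I), θ (univGen τ β s i) = c s i := by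
      intro s i
      rw [hθ, univGen, Ideal.Quotient.liftₐ_apply]
      erw [Ideal.Quotient.lift_mk]
      rw [hθ₀]
      simp
    have hmain : TensorProduct.map LinearMap.id θ.toLinearMap ∘ₗ η = f := by
      have hsingle : ∀ i : I,
          (TensorProduct.map LinearMap.id θ.toLinearMap ∘ₗ η) (Finsupp.single i 1)
            = f (Finsupp.single i 1) := by
        intro i
        rw [LinearMap.comp_apply, hη, map_sum, hfrep i]
        refine Finset.sum_congr rfl fun s _ => ?_
        simp [TensorProduct.map_tmul, hθgen]
      ext i
      simpa using hsingle i
    refine ⟨θ, hmain, ?_⟩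
    intro θ' hθ'
    have hθ'gen : ∀ (s : Fin n) (i : I), θ' (univGen τ β s i) = c s i := by
      intro s i
      have h1 := LinearMap.congr_fun hθ' (Finsupp.single i 1)
      rw [LinearMap.comp_apply, hη, map_sum] at h1
      simp only [TensorProduct.map_tmul, LinearMap.id_coe, id_eq, AlgHom.toLinearMap_apply] at h1
      have h2 := congrArg (coordMap k A s) h1
      rwa [coordMap_sum_single] at h2
    apply Ideal.Quotient.algHom_ext
    apply MvPolynomial.algHom_ext
    intro p
    simp only [AlgHom.comp_apply]
    rw [show (Ideal.Quotient.mkₐ k (univIdeal τ β) (X p) : univAlg τ β)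
      = univGen τ β p.1 p.2 from rfl, hθ'gen p.1 p.2, hθgen p.1 p.2]
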